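/- arXiv:1612.08902 — 2 statements merged into one kernel-verified Lean document; each statement's English description precedes it below -/
import Mathlib

section
/- Suppose a multivariate polynomial f over a field is homogeneous of degree n and f = P·Q for polynomials P, Q. Then P and Q are each homogeneous (of degrees summing to n). -/
open MvPolynomial

private lemma degree_add_aux {σ : Type*} (u v : σ →₀ ℕ) :
    (u + v).degree = u.degree + v.degree := by
  simp [Finsupp.degree_eq_weight_one, map_add]

private lemma key_aux {σ F : Type*} [CommSemiring F] (P Q : MvPolynomial σ F) (a b : ℕ)
    (h : ∀ u ∈ P.support, ∀ v ∈ Q.support, u.degree + v.degree = a + b →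
      u.degree = a ∧ v.degree = b) :
    homogeneousComponent (a + b) (P * Q)
      = homogeneousComponent a P * homogeneousComponent b Q := by
  classical
  ext d
  rw [coeff_homogeneousComponent]
  split_ifs with hd
  · rw [coeff_mul, coeff_mul]
    apply Finset.sum_congr rfl
    intro x hx
    rw [Finset.HasAntidiagonal.mem_antidiagonal] at hx
    rw [coeff_homogeneousComponent, coeff_homogeneousComponent]
    by_cases h1 : coeff x.1 P = 0
    · simp [h1]
    by_cases h2 : coeff x.2 Q = 0
    · simp [h2]
    have hx1 : x.1 ∈ P.support := mem_support_iff.mpr h1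
    have hx2 : x.2 ∈ Q.support := mem_support_iff.mpr h2
    have hdeg : x.1.degree + x.2.degree = a + b := by
      rw [← degree_add_aux, hx, hd]
    obtain ⟨e1, e2⟩ := h _ hx1 _ hx2 hdeg
    rw [if_pos e1, if_pos e2]
  · rw [coeff_mul]
    symm
    apply Finset.sum_eq_zero
    intro x hx
    rw [Finset.HasAntidiagonal.mem_antidiagonal] at hx
    rw [coeff_homogeneousComponent, coeff_homogeneousComponent]
    by_cases e1 : x.1.degree = a
    · by_cases e2 : x.2.degree = b
      · exact absurd (by rw [← hx, degree_add_aux, e1, e2]) hd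
      · simp [e2]
    · simp [e1]

private lemma comp_ne_zero_aux {σ F : Type*} [CommSemiring F] (P : MvPolynomial σ F)
    {a : ℕ} {u : σ →₀ ℕ} (hu : u ∈ P.support) (hdeg : u.degree = a) :
    homogeneousComponent a P ≠ 0 := by
  intro h0
  have : coeff u (homogeneousComponent a P) = coeff u P := by
    rw [coeff_homogeneousComponent, if_pos hdeg]
  rw [h0, coeff_zero] at this
  exact (mem_support_iff.mp hu) this.symm

theorem stmt_9 {σ : Type*} {F : Type*} [Field F]
    (f P Q : MvPolynomial σ F) (n : ℕ)
    (hf : f.IsHomogeneous n) (hf0 : f ≠ 0) (hPQ : f = P * Q) :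
    ∃ p q : ℕ, p + q = n ∧ P.IsHomogeneous p ∧ Q.IsHomogeneous q := by
  have hP : P ≠ 0 := fun h => hf0 (by rw [hPQ, h, zero_mul])
  have hQ : Q ≠ 0 := fun h => hf0 (by rw [hPQ, h, mul_zero])
  have hPne : (P.support.image Finsupp.degree).Nonempty :=
    (MvPolynomial.support_nonempty.mpr hP).image _
  have hQne : (Q.support.image Finsupp.degree).Nonempty :=
    (MvPolynomial.support_nonempty.mpr hQ).image _
  set a := (P.support.image Finsupp.degree).max' hPne with ha
  set a' := (P.support.image Finsupp.degree).min' hPne with ha'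
  set b := (Q.support.image Finsupp.degree).max' hQne with hb
  set b' := (Q.support.image Finsupp.degree).min' hQne with hb'
  have hPa : ∀ d ∈ P.support, d.degree ≤ a := fun d hd =>
    Finset.le_max' _ _ (Finset.mem_image_of_mem _ hd)
  have hPa' : ∀ d ∈ P.support, a' ≤ d.degree := fun d hd =>
    Finset.min'_le _ _ (Finset.mem_image_of_mem _ hd)
  have hQb : ∀ d ∈ Q.support, d.degree ≤ b := fun d hd =>
    Finset.le_max' _ _ (Finset.mem_image_of_mem _ hd)
  have hQb' : ∀ d ∈ Q.support, b' ≤ d.degree := fun d hd =>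
    Finset.min'_le _ _ (Finset.mem_image_of_mem _ hd)
  -- nonzero components
  obtain ⟨u, hu, hud⟩ := Finset.mem_image.mp ((P.support.image Finsupp.degree).max'_mem hPne)
  obtain ⟨u', hu', hud'⟩ := Finset.mem_image.mp ((P.support.image Finsupp.degree).min'_mem hPne)
  obtain ⟨v, hv, hvd⟩ := Finset.mem_image.mp ((Q.support.image Finsupp.degree).max'_mem hQne)
  obtain ⟨v', hv', hvd'⟩ := Finset.mem_image.mp ((Q.support.image Finsupp.degree).min'_mem hQne)
  have hcompP := comp_ne_zero_aux P hu hud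
  have hcompP' := comp_ne_zero_aux P hu' hud'
  have hcompQ := comp_ne_zero_aux Q hv hvd
  have hcompQ' := comp_ne_zero_aux Q hv' hvd'
  -- the component of f at m is (if m = n then f else 0)
  have hfcomp : ∀ m : ℕ, homogeneousComponent m f = if m = n then f else 0 :=
    fun m => homogeneousComponent_of_mem ((mem_homogeneousSubmodule n f).mpr hf)
  have hsum : ∀ m : ℕ, homogeneousComponent m (P * Q) ≠ 0 → m = n := by
    intro m hm
    rw [← hPQ, hfcomp m] at hm
    by_contra hmn
    rw [if_neg hmn] at hm
    exact hm rfl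
  have hmax : a + b = n := by
    apply hsum
    rw [key_aux P Q a b (fun u hu v hv hsum => by
      have h1 := hPa u hu; have h2 := hQb v hv; omega)]
    exact mul_ne_zero hcompP hcompQ
  have hmin : a' + b' = n := by
    apply hsum
    rw [key_aux P Q a' b' (fun u hu v hv hsum => by
      have h1 := hPa' u hu; have h2 := hQb' v hv; omega)]
    exact mul_ne_zero hcompP' hcompQ'
  have haa : a' ≤ a := hPa' u hu |>.trans_eq hud
  have hbb : b' ≤ b := hQb' v hv |>.trans_eq hvd
  have haeq : a = a' := by omega
  have hbeq : b = b' := by omega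
  refine ⟨a, b, hmax, ?_, ?_⟩
  · intro d hd
    rw [show Finsupp.weight (1 : σ → ℕ) d = Finsupp.weight (fun _ => (1 : ℕ)) d from rfl, ← Finsupp.degree_eq_weight_one]
    have hds : d ∈ P.support := mem_support_iff.mpr hd
    exact le_antisymm (hPa d hds) (haeq ▸ hPa' d hds)
  · intro d hd
    rw [show Finsupp.weight (1 : σ → ℕ) d = Finsupp.weight (fun _ => (1 : ℕ)) d from rfl, ← Finsupp.degree_eq_weight_one]
    have hds : d ∈ Q.support := mem_support_iff.mpr hd
    exact le_antisymm (hQb d hds) (hbeq ▸ hQb' d hds)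
end

section
/- Let P(a,b,c) be a polynomial of degree at most 4 in R[a,b,c] such that P vanishes whenever the triangle A=(0,0), B=(b,a), C=(c,0) is isosceles, i.e., P vanishes on the zero sets of a² + b² − 2bc, of a² + b² − c², and of 2b − c (over the complex numbers). Then P is the zero polynomial. -/
open MvPolynomial

section Aux

/-- `X 0` is prime in `ℂ[X₀,…,Xₙ]`. -/
lemma aux_prime_X0 (n : ℕ) : Prime (X 0 : MvPolynomial (Fin (n + 1)) ℂ) := by
  rw [← MulEquiv.prime_iff (finSuccEquiv ℂ n).toMulEquiv]
  show Prime ((finSuccEquiv ℂ n) (X 0))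
  rw [finSuccEquiv_X_zero]
  exact Polynomial.prime_X

/-- If `f` vanishes at a point where `g` doesn't, then `f ∤ g`. -/
lemma aux_not_dvd {σ : Type*} {f g : MvPolynomial σ ℂ} (x : σ → ℂ)
    (hf : eval x f = 0) (hg : eval x g ≠ 0) : ¬ f ∣ g := by
  rintro ⟨t, rfl⟩
  exact hg (by rw [map_mul, hf, zero_mul])

/-- Nullstellensatz consequence: a prime polynomial whose zero set is contained in
that of `Q` divides `Q`. -/
lemma aux_dvd_of_vanish {f Q : MvPolynomial (Fin 3) ℂ} (hf : Prime f)
    (h : ∀ x : Fin 3 → ℂ, eval x f = 0 → eval x Q = 0) : f ∣ Q := by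
  have hI : (Ideal.span {f}).IsPrime := (Ideal.span_singleton_prime hf.ne_zero).2 hf
  have hQ : Q ∈ vanishingIdeal ℂ (zeroLocus ℂ (Ideal.span {f})) := by
    intro x hx
    exact h x (hx f (Ideal.subset_span rfl))
  rw [vanishingIdeal_zeroLocus_eq_radical, hI.radical] at hQ
  exact Ideal.mem_span_singleton.mp hQ

/-- Eisenstein: `X² + C (p * q)` is irreducible when `p` is prime and `p ∤ q`. -/
lemma aux_irreducible_quad {p q : MvPolynomial (Fin 2) ℂ} (hp : Prime p) (hq : ¬ p ∣ q) :
    Irreducible (Polynomial.X ^ 2 + Polynomial.C (p * q) :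
      Polynomial (MvPolynomial (Fin 2) ℂ)) := by
  have hmonic : (Polynomial.X ^ 2 + Polynomial.C (p * q) :
      Polynomial (MvPolynomial (Fin 2) ℂ)).Monic := Polynomial.monic_X_pow_add_C _ (by norm_num)
  have hdeg : (Polynomial.X ^ 2 + Polynomial.C (p * q) :
      Polynomial (MvPolynomial (Fin 2) ℂ)).natDegree = 2 := Polynomial.natDegree_X_pow_add_C
  have hIprime : (Ideal.span {p}).IsPrime := (Ideal.span_singleton_prime hp.ne_zero).2 hp
  refine Polynomial.IsEisensteinAt.irreducible (𝓟 := Ideal.span {p}) ?_ hIprime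
    hmonic.isPrimitive (by rw [hdeg]; norm_num)
  constructor
  · rw [hmonic.leadingCoeff, Ideal.mem_span_singleton]
    intro h
    exact hp.not_unit (isUnit_of_dvd_one h)
  · intro n hn
    rw [hdeg] at hn
    interval_cases n <;>
      simp [Polynomial.coeff_X_pow, Ideal.mem_span_singleton, Dvd.intro q rfl]
  · simp only [Polynomial.coeff_add, Polynomial.coeff_X_pow, Polynomial.coeff_C]
    norm_num
    rw [Ideal.span_singleton_pow, Ideal.mem_span_singleton, pow_two]
    intro h
    exact hq ((mul_dvd_mul_iff_left hp.ne_zero).mp h)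

lemma aux_fse2_X1 : (finSuccEquiv ℂ 2) (X 1) = Polynomial.C (X 0) := by
  rw [show (1 : Fin 3) = Fin.succ 0 from rfl, finSuccEquiv_X_succ]

lemma aux_fse2_X2 : (finSuccEquiv ℂ 2) (X 2) = Polynomial.C (X 1) := by
  rw [show (2 : Fin 3) = Fin.succ 1 from rfl, finSuccEquiv_X_succ]

lemma aux_fse1_X1 : (finSuccEquiv ℂ 1) (X 1) = Polynomial.C (X 0) := by
  rw [show (1 : Fin 2) = Fin.succ 0 from rfl, finSuccEquiv_X_succ]

/-- `a² + b² - 2bc` is prime. -/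
lemma aux_prime_f1 : Prime (X 0 ^ 2 + X 1 ^ 2 - 2 * X 1 * X 2 : MvPolynomial (Fin 3) ℂ) := by
  rw [← MulEquiv.prime_iff (finSuccEquiv ℂ 2).toMulEquiv]
  show Prime ((finSuccEquiv ℂ 2) (X 0 ^ 2 + X 1 ^ 2 - 2 * X 1 * X 2))
  have key : (finSuccEquiv ℂ 2) (X 0 ^ 2 + X 1 ^ 2 - 2 * X 1 * X 2) =
      Polynomial.X ^ 2 + Polynomial.C ((X 0 : MvPolynomial (Fin 2) ℂ) * (X 0 - 2 * X 1)) := by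
    simp only [map_sub, map_add, map_pow, map_mul, map_ofNat, finSuccEquiv_X_zero,
      aux_fse2_X1, aux_fse2_X2, Polynomial.C_mul, Polynomial.C_sub]
    ring
  rw [key]
  have hq : ¬ (X 0 : MvPolynomial (Fin 2) ℂ) ∣ (X 0 - 2 * X 1) := by
    apply aux_not_dvd ![0, 1] <;> simp
  exact UniqueFactorizationMonoid.irreducible_iff_prime.mp
    (aux_irreducible_quad (aux_prime_X0 1) hq)

/-- `b - c` is prime in two variables. -/
lemma aux_prime_sub : Prime (X 0 - X 1 : MvPolynomial (Fin 2) ℂ) := by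
  rw [← MulEquiv.prime_iff (finSuccEquiv ℂ 1).toMulEquiv]
  show Prime ((finSuccEquiv ℂ 1) (X 0 - X 1))
  rw [map_sub, finSuccEquiv_X_zero, aux_fse1_X1]
  exact Polynomial.prime_X_sub_C _

/-- `a² + b² - c²` is prime. -/
lemma aux_prime_f2 : Prime (X 0 ^ 2 + X 1 ^ 2 - X 2 ^ 2 : MvPolynomial (Fin 3) ℂ) := by
  rw [← MulEquiv.prime_iff (finSuccEquiv ℂ 2).toMulEquiv]
  show Prime ((finSuccEquiv ℂ 2) (X 0 ^ 2 + X 1 ^ 2 - X 2 ^ 2))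
  have key : (finSuccEquiv ℂ 2) (X 0 ^ 2 + X 1 ^ 2 - X 2 ^ 2) =
      Polynomial.X ^ 2 + Polynomial.C (((X 0 : MvPolynomial (Fin 2) ℂ) - X 1) * (X 0 + X 1)) := by
    simp only [map_sub, map_add, map_pow, map_mul, finSuccEquiv_X_zero,
      aux_fse2_X1, aux_fse2_X2, Polynomial.C_mul, Polynomial.C_sub, Polynomial.C_add]
    ring
  rw [key]
  have hq : ¬ ((X 0 : MvPolynomial (Fin 2) ℂ) - X 1) ∣ (X 0 + X 1) := by
    apply aux_not_dvd ![1, 1] <;> simp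
  exact UniqueFactorizationMonoid.irreducible_iff_prime.mp
    (aux_irreducible_quad aux_prime_sub hq)

/-- `2b - c` is prime. -/
lemma aux_prime_f3 : Prime (2 * X 1 - X 2 : MvPolynomial (Fin 3) ℂ) := by
  rw [← MulEquiv.prime_iff (renameEquiv ℂ (Equiv.swap (0 : Fin 3) 2)).toMulEquiv]
  show Prime (rename (Equiv.swap (0 : Fin 3) 2) (2 * X 1 - X 2))
  have key : rename (Equiv.swap (0 : Fin 3) 2) (2 * X 1 - X 2) =
      (2 * X 1 - X 0 : MvPolynomial (Fin 3) ℂ) := by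
    rw [map_sub, map_mul, map_ofNat, rename_X, rename_X, Equiv.swap_apply_right,
      Equiv.swap_apply_of_ne_of_ne (by decide) (by decide)]
  rw [key, ← MulEquiv.prime_iff (finSuccEquiv ℂ 2).toMulEquiv]
  show Prime ((finSuccEquiv ℂ 2) (2 * X 1 - X 0))
  have key2 : (finSuccEquiv ℂ 2) (2 * X 1 - X 0) =
      -(Polynomial.X - Polynomial.C (2 * X 0 : MvPolynomial (Fin 2) ℂ)) := by
    rw [map_sub, map_mul, map_ofNat, aux_fse2_X1, finSuccEquiv_X_zero, neg_sub,
      Polynomial.C_mul, map_ofNat]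
  rw [key2]
  exact (Polynomial.prime_X_sub_C _).neg

/-- The substitution `Xᵢ ↦ C Xᵢ * X`, used to track total degrees. -/
noncomputable def phi : MvPolynomial (Fin 3) ℂ →ₐ[ℂ] Polynomial (MvPolynomial (Fin 3) ℂ) :=
  aeval (fun i => Polynomial.C (X i) * Polynomial.X)

lemma phi_X (i : Fin 3) : phi (X i) = Polynomial.C (X i) * Polynomial.X := by
  simp [phi]

lemma phi_eval_one (p : MvPolynomial (Fin 3) ℂ) : Polynomial.eval 1 (phi p) = p := by
  induction p using MvPolynomial.induction_on with
  | C a => simp [phi, algebraMap_eq, Polynomial.algebraMap_apply]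
  | add p q hp hq => simp [map_add, hp, hq]
  | mul_X p i hp => rw [map_mul, Polynomial.eval_mul, hp, phi_X]; simp

lemma phi_ne_zero {p : MvPolynomial (Fin 3) ℂ} (hp : p ≠ 0) : phi p ≠ 0 := fun h =>
  hp (by rw [← phi_eval_one p, h, Polynomial.eval_zero])

lemma phi_natDegree_le (p : MvPolynomial (Fin 3) ℂ) : (phi p).natDegree ≤ p.totalDegree := by
  conv_lhs => rw [p.as_sum]
  rw [map_sum]
  apply Polynomial.natDegree_sum_le_of_forall_le
  intro m hm
  rw [phi, aeval_monomial]
  refine le_trans Polynomial.natDegree_mul_le ?_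
  have h0 : (algebraMap ℂ (Polynomial (MvPolynomial (Fin 3) ℂ)) (coeff m p)).natDegree = 0 := by
    rw [Polynomial.algebraMap_apply]
    exact Polynomial.natDegree_C _
  rw [h0, zero_add, Finsupp.prod]
  have hbound : ∀ i : Fin 3,
      ((Polynomial.C (X i : MvPolynomial (Fin 3) ℂ) * Polynomial.X) ^ m i).natDegree ≤ m i := by
    intro i
    refine le_trans Polynomial.natDegree_pow_le ?_
    have h1 : (Polynomial.C (X i : MvPolynomial (Fin 3) ℂ) * Polynomial.X).natDegree ≤ 1 := by
      have := Polynomial.natDegree_C_mul_X_pow_le (X i : MvPolynomial (Fin 3) ℂ) 1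
      rwa [pow_one] at this
    calc m i * (Polynomial.C (X i : MvPolynomial (Fin 3) ℂ) * Polynomial.X).natDegree
        ≤ m i * 1 := Nat.mul_le_mul_left _ h1
      _ = m i := mul_one _
  calc (∏ a ∈ m.support, (Polynomial.C (X a : MvPolynomial (Fin 3) ℂ) * Polynomial.X) ^ m a).natDegree
      ≤ ∑ a ∈ m.support, ((Polynomial.C (X a : MvPolynomial (Fin 3) ℂ) * Polynomial.X) ^ m a).natDegree :=
        Polynomial.natDegree_prod_le m.support
          (fun a => (Polynomial.C (X a : MvPolynomial (Fin 3) ℂ) * Polynomial.X) ^ m a)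
    _ ≤ ∑ a ∈ m.support, m a :=
        Finset.sum_le_sum
          (f := fun a => ((Polynomial.C (X a : MvPolynomial (Fin 3) ℂ) * Polynomial.X) ^ m a).natDegree)
          (g := fun a => m a) fun i _ => hbound i
    _ ≤ p.totalDegree := by
        have := le_totalDegree hm
        rwa [Finsupp.sum] at this

lemma phi_f1 : phi (X 0 ^ 2 + X 1 ^ 2 - 2 * X 1 * X 2) =
    Polynomial.C (X 0 ^ 2 + X 1 ^ 2 - 2 * X 1 * X 2 : MvPolynomial (Fin 3) ℂ)
      * Polynomial.X ^ 2 := by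
  simp only [phi, map_add, map_sub, map_mul, map_pow, aeval_X, map_ofNat,
    Polynomial.C_add, Polynomial.C_sub, Polynomial.C_mul, Polynomial.C_pow]
  ring

lemma phi_f2 : phi (X 0 ^ 2 + X 1 ^ 2 - X 2 ^ 2) =
    Polynomial.C (X 0 ^ 2 + X 1 ^ 2 - X 2 ^ 2 : MvPolynomial (Fin 3) ℂ)
      * Polynomial.X ^ 2 := by
  simp only [phi, map_add, map_sub, map_mul, map_pow, aeval_X,
    Polynomial.C_add, Polynomial.C_sub, Polynomial.C_pow]
  ring

lemma phi_f3 : phi (2 * X 1 - X 2) =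
    Polynomial.C (2 * X 1 - X 2 : MvPolynomial (Fin 3) ℂ) * Polynomial.X := by
  simp only [phi, map_sub, map_mul, aeval_X, map_ofNat,
    Polynomial.C_sub, Polynomial.C_mul]
  ring

end Aux

/-- Variables: `a = X 0`, `b = X 1`, `c = X 2`. If a real polynomial of degree at most 4
vanishes (over ℂ) on the zero sets of `a² + b² - 2bc`, `a² + b² - c²` and `2b - c`,
then it is the zero polynomial. -/
theorem stmt_12 (P : MvPolynomial (Fin 3) ℝ)
    (hdeg : P.totalDegree ≤ 4)
    (h1 : ∀ x : Fin 3 → ℂ, eval x (X 0 ^ 2 + X 1 ^ 2 - 2 * X 1 * X 2 : MvPolynomial (Fin 3) ℂ) = 0 →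
      eval x (P.map (algebraMap ℝ ℂ)) = 0)
    (h2 : ∀ x : Fin 3 → ℂ, eval x (X 0 ^ 2 + X 1 ^ 2 - X 2 ^ 2 : MvPolynomial (Fin 3) ℂ) = 0 →
      eval x (P.map (algebraMap ℝ ℂ)) = 0)
    (h3 : ∀ x : Fin 3 → ℂ, eval x (2 * X 1 - X 2 : MvPolynomial (Fin 3) ℂ) = 0 →
      eval x (P.map (algebraMap ℝ ℂ)) = 0) :
    P = 0 := by
  by_contra hP
  set f1 : MvPolynomial (Fin 3) ℂ := X 0 ^ 2 + X 1 ^ 2 - 2 * X 1 * X 2 with hf1def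
  set f2 : MvPolynomial (Fin 3) ℂ := X 0 ^ 2 + X 1 ^ 2 - X 2 ^ 2 with hf2def
  set f3 : MvPolynomial (Fin 3) ℂ := 2 * X 1 - X 2 with hf3def
  set Q : MvPolynomial (Fin 3) ℂ := P.map (algebraMap ℝ ℂ) with hQdef
  have hp1 := aux_prime_f1
  have hp2 := aux_prime_f2
  have hp3 := aux_prime_f3
  have hQ0 : Q ≠ 0 := by
    intro h
    apply hP
    apply MvPolynomial.map_injective (algebraMap ℝ ℂ) (algebraMap ℝ ℂ).injective
    rw [map_zero]
    exact h
  -- divisibility by the three primes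
  obtain ⟨u1, hu1⟩ : f1 ∣ Q := aux_dvd_of_vanish hp1 h1
  have hnd21 : ¬ f2 ∣ f1 := by
    apply aux_not_dvd ![0, 1, 1] <;> simp [hf1def, hf2def] <;> norm_num
  have hnd31 : ¬ f3 ∣ f1 := by
    apply aux_not_dvd ![1, 1, 2] <;> simp [hf1def, hf3def] <;> norm_num
  have hnd32 : ¬ f3 ∣ f2 := by
    apply aux_not_dvd ![1, 1, 2] <;> simp [hf2def, hf3def] <;> norm_num
  obtain ⟨u2, hu2⟩ : f2 ∣ u1 := by
    have : f2 ∣ f1 * u1 := hu1 ▸ aux_dvd_of_vanish hp2 h2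
    exact (hp2.dvd_or_dvd this).resolve_left hnd21
  obtain ⟨u, hu⟩ : f3 ∣ u2 := by
    have h' : f3 ∣ f1 * (f2 * u2) := by
      rw [← hu2, ← hu1]; exact aux_dvd_of_vanish hp3 h3
    exact ((hp3.dvd_or_dvd ((hp3.dvd_or_dvd h').resolve_left hnd31)).resolve_left hnd32)
  have hQfact : Q = f1 * (f2 * (f3 * u)) := by rw [hu1, hu2, hu]
  have hu0 : u ≠ 0 := by
    intro h
    apply hQ0
    rw [hQfact, h, mul_zero, mul_zero, mul_zero]
  -- degree count via phi
  have hdQ : Q.totalDegree ≤ 4 := by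
    have hsub : Q.totalDegree ≤ P.totalDegree := Finset.sup_mono (support_map_subset _ P)
    omega
  have hle4 : (phi Q).natDegree ≤ 4 := le_trans (phi_natDegree_le Q) hdQ
  have hfactor : phi Q = Polynomial.C (f1 * f2 * f3) * Polynomial.X ^ 5 * phi u := by
    rw [hQfact, map_mul, map_mul, map_mul, phi_f1, phi_f2, phi_f3,
      Polynomial.C_mul, Polynomial.C_mul]
    ring
  have hg : f1 * f2 * f3 ≠ 0 := mul_ne_zero (mul_ne_zero hp1.ne_zero hp2.ne_zero) hp3.ne_zero
  have hCX : (Polynomial.C (f1 * f2 * f3) * Polynomial.X ^ 5 :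
      Polynomial (MvPolynomial (Fin 3) ℂ)) ≠ 0 :=
    mul_ne_zero (by simpa using hg) (pow_ne_zero _ Polynomial.X_ne_zero)
  have h5 : (phi Q).natDegree = 5 + (phi u).natDegree := by
    rw [hfactor, Polynomial.natDegree_mul hCX (phi_ne_zero hu0),
      Polynomial.natDegree_C_mul_X_pow 5 _ hg]
  omega
end
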